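/- The CDGA $D_\bullet = \QQ[\gamma,\bar\gamma] \otimes E(y)$ with $|\gamma| = 2$, $|\bar\gamma| = -2$, $|y| = 1$, $d(\gamma) = d(\bar\gamma) = 0$, and $d(y) = 1 - \gamma\bar\gamma$ has homology isomorphic as a graded $\QQ$-algebra to the Laurent polynomial ring $\QQ[\beta^{\pm 1}]$ with $|\beta| = 2$, the isomorphism sending the class of $\gamma$ to $\beta$. -/

import Mathlib

/-- A `ℤ`-graded commutative (in the graded sense) differential graded algebra
over `ℚ`: a `ℚ`-algebra with an internal `ℤ`-grading by `ℚ`-submodules, graded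
commutativity with Koszul signs, and a degree `-1` differential satisfying the
signed Leibniz rule. -/
structure CDGA where
  carrier : Type
  [ring : Ring carrier]
  [alg : Algebra ℚ carrier]
  grading : ℤ → Submodule ℚ carrier
  isInternal : DirectSum.IsInternal grading
  one_mem : (1 : carrier) ∈ grading 0
  mul_mem : ∀ {i j : ℤ} {x y : carrier},
    x ∈ grading i → y ∈ grading j → x * y ∈ grading (i + j)
  gcomm : ∀ {i j : ℤ} {x y : carrier}, x ∈ grading i → y ∈ grading j →
    x * y = ((-1 : ℚ) ^ (i * j)) • (y * x)
  d : carrier →ₗ[ℚ] carrier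
  d_mem : ∀ {i : ℤ} {x : carrier}, x ∈ grading i → d x ∈ grading (i - 1)
  d_d : ∀ x : carrier, d (d x) = 0
  leibniz : ∀ {i : ℤ} {x y : carrier}, x ∈ grading i →
    d (x * y) = d x * y + ((-1 : ℚ) ^ i) • (x * d y)

attribute [instance] CDGA.ring CDGA.alg

namespace CDGA

/-- `x` is a boundary in degree `k`, i.e. `x = d z` for some `z` of degree `k + 1`. -/
def IsBoundary (A : CDGA) (k : ℤ) (x : A.carrier) : Prop :=
  ∃ z ∈ A.grading (k + 1), A.d z = x

/-- A morphism of CDGAs: a `ℚ`-algebra homomorphism preserving the grading and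
commuting with the differentials. -/
structure Hom (A B : CDGA) where
  toFun : A.carrier →ₐ[ℚ] B.carrier
  map_grading : ∀ {i : ℤ} {x : A.carrier}, x ∈ A.grading i → toFun x ∈ B.grading i
  map_d : ∀ x : A.carrier, toFun (A.d x) = B.d (toFun x)

/-- A quasi-isomorphism of CDGAs: a morphism inducing an isomorphism on homology
in every degree. -/
def QuasiIso {A B : CDGA} (f : Hom A B) : Prop :=
  ∀ k : ℤ,
    (∀ y ∈ B.grading k, B.d y = 0 →
      ∃ x ∈ A.grading k, A.d x = 0 ∧ B.IsBoundary k (f.toFun x - y)) ∧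
    (∀ x ∈ A.grading k, A.d x = 0 → B.IsBoundary k (f.toFun x) → A.IsBoundary k x)

/-- `β^k` for `k : ℤ`, expressed via `β` and a chosen inverse `β'`. -/
def ipow {R : Type} [Ring R] (β β' : R) (k : ℤ) : R :=
  if 0 ≤ k then β ^ k.toNat else β' ^ (-k).toNat

/-- The homology of `A` is the Laurent algebra `ℚ[β^{±1}]`, `|β| = 2`, with `β` the
class of the cycle `β` (with chosen homology inverse `β'`): odd homology vanishes,
and the homology in degree `2k` is one-dimensional, spanned by the (nonzero) class
of `β^k`. -/
def HomologyIsLaurentOn (A : CDGA) (β β' : A.carrier) : Prop :=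
  β ∈ A.grading 2 ∧ β' ∈ A.grading (-2) ∧ A.d β = 0 ∧ A.d β' = 0 ∧
  A.IsBoundary 0 (β * β' - 1) ∧
  (∀ k : ℤ, ∀ x ∈ A.grading (2 * k + 1), A.d x = 0 → A.IsBoundary (2 * k + 1) x) ∧
  (∀ k : ℤ, ∀ x ∈ A.grading (2 * k), A.d x = 0 →
    ∃ c : ℚ, A.IsBoundary (2 * k) (x - c • ipow β β' k)) ∧
  (∀ k : ℤ, ¬ A.IsBoundary (2 * k) (ipow β β' k))

end CDGA

open CDGA

set_option linter.unusedSectionVars false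
set_option linter.unusedTactic false

namespace KoszulAux

def dg (p : ℕ × ℕ × Bool) : ℤ := 2 * p.1 - 2 * p.2.1 + (cond p.2.2 1 0)

variable (D : CDGA)

theorem mem_of_eq {i j : ℤ} {x : D.carrier} (h : x ∈ D.grading i) (hij : i = j) :
    x ∈ D.grading j := hij ▸ h

theorem pow_mem {x : D.carrier} {i : ℤ} (hx : x ∈ D.grading i) :
    ∀ n : ℕ, x ^ n ∈ D.grading (n * i)
  | 0 => by simpa using D.one_mem
  | n+1 => by
    have h := D.mul_mem hx (pow_mem hx n)
    rw [← pow_succ'] at h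
    exact mem_of_eq D h (by push_cast; ring)

theorem comm_of_even {i j : ℤ} {x z : D.carrier} (hx : x ∈ D.grading i)
    (hz : z ∈ D.grading j) (h : Even (i * j)) : x * z = z * x := by
  rw [D.gcomm hx hz, Even.neg_one_zpow h, one_smul]

theorem d_one : D.d 1 = 0 := by
  have h := D.leibniz (x := 1) (y := 1) D.one_mem
  simp only [mul_one, one_mul, zpow_zero, one_smul] at h
  have h2 : D.d 1 + 0 = D.d 1 + D.d 1 := by rw [add_zero]; exact h
  exact (add_left_cancel h2).symm

theorem d_pow {x : D.carrier} {i : ℤ} (hx : x ∈ D.grading i) (hdx : D.d x = 0) :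
    ∀ n : ℕ, D.d (x ^ n) = 0
  | 0 => by rw [pow_zero]; exact d_one D
  | n+1 => by
    rw [pow_succ', D.leibniz hx, hdx, d_pow hx hdx n]
    simp

theorem isBoundary_zero (k : ℤ) : D.IsBoundary k 0 :=
  ⟨0, Submodule.zero_mem _, map_zero _⟩

theorem isBoundary_add {k : ℤ} {x x' : D.carrier} (h : D.IsBoundary k x)
    (h' : D.IsBoundary k x') : D.IsBoundary k (x + x') := by
  obtain ⟨z, hz, hdz⟩ := h
  obtain ⟨z', hz', hdz'⟩ := h'
  exact ⟨z + z', Submodule.add_mem _ hz hz', by rw [map_add, hdz, hdz']⟩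

theorem isBoundary_smul {k : ℤ} {x : D.carrier} (r : ℚ) (h : D.IsBoundary k x) :
    D.IsBoundary k (r • x) := by
  obtain ⟨z, hz, hdz⟩ := h
  exact ⟨r • z, Submodule.smul_mem _ r hz, by rw [map_smul, hdz]⟩

theorem isBoundary_of_eq {k : ℤ} {x x' : D.carrier} (h : D.IsBoundary k x)
    (e : x = x') : D.IsBoundary k x' := e ▸ h

theorem isBoundary_sum {k : ℤ} {ι : Type} {s : Finset ι} {f : ι → D.carrier}
    (h : ∀ i ∈ s, D.IsBoundary k (f i)) : D.IsBoundary k (∑ i ∈ s, f i) :=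
  Finset.sum_induction f _ (fun _ _ => isBoundary_add D) (isBoundary_zero D k) h


section Monomials

variable {D : CDGA} (γ γ' y : D.carrier)

theorem powγ_mem (hγ : γ ∈ D.grading 2) (a : ℕ) : γ ^ a ∈ D.grading (2 * a) :=
  mem_of_eq D (pow_mem D hγ a) (by ring)

theorem powγ'_mem (hγ' : γ' ∈ D.grading (-2)) (c : ℕ) : γ' ^ c ∈ D.grading (-(2 * c)) :=
  mem_of_eq D (pow_mem D hγ' c) (by ring)

theorem mono_mem (hγ : γ ∈ D.grading 2) (hγ' : γ' ∈ D.grading (-2)) (a c : ℕ) :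
    γ ^ a * γ' ^ c ∈ D.grading (2 * a - 2 * c) :=
  mem_of_eq D (D.mul_mem (powγ_mem γ hγ a) (powγ'_mem γ' hγ' c)) (by ring)

theorem d_mono (hγ : γ ∈ D.grading 2) (hγ' : γ' ∈ D.grading (-2))
    (hdγ : D.d γ = 0) (hdγ' : D.d γ' = 0) (a c : ℕ) :
    D.d (γ ^ a * γ' ^ c) = 0 := by
  rw [D.leibniz (powγ_mem γ hγ a), d_pow D hγ hdγ a, d_pow D hγ' hdγ' c]
  simp

theorem mono_shuffle (hγ : γ ∈ D.grading 2) (hγ' : γ' ∈ D.grading (-2)) (a c : ℕ) :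
    γ ^ a * γ' ^ c * (γ * γ') = γ ^ (a + 1) * γ' ^ (c + 1) := by
  have hc : γ' ^ c * γ = γ * γ' ^ c :=
    comm_of_even D (powγ'_mem γ' hγ' c) hγ ⟨-(2 * c), by ring⟩
  rw [pow_succ, pow_succ, mul_assoc (γ ^ a) (γ' ^ c), ← mul_assoc (γ' ^ c) γ γ', hc,
    mul_assoc γ (γ' ^ c) γ', mul_assoc (γ ^ a) γ (γ' ^ c * γ')]

end Monomials

theorem ipow_natCast {R : Type} [Ring R] (β β' : R) (a : ℕ) : ipow β β' (a : ℤ) = β ^ a := by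
  rw [ipow, if_pos (Int.natCast_nonneg a), Int.toNat_natCast]

theorem ipow_neg_natCast {R : Type} [Ring R] (β β' : R) (c : ℕ) (hc : 0 < c) :
    ipow β β' (-(c : ℤ)) = β' ^ c := by
  rw [ipow, if_neg (by omega), neg_neg, Int.toNat_natCast]

section BasisLemmas

variable {D : CDGA} {γ γ' y : D.carrier} (b : Module.Basis (ℕ × ℕ × Bool) ℚ D.carrier)
variable (hγ : γ ∈ D.grading 2) (hγ' : γ' ∈ D.grading (-2)) (hy : y ∈ D.grading 1)
variable (hdγ : D.d γ = 0) (hdγ' : D.d γ' = 0) (hdy : D.d y = 1 - γ * γ')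
variable (hb : ∀ p : ℕ × ℕ × Bool, b p = γ ^ p.1 * γ' ^ p.2.1 * (cond p.2.2 y 1))

noncomputable def phi : D.carrier →ₗ[ℚ] ℚ :=
  (Finsupp.linearCombination ℚ (fun p : ℕ × ℕ × Bool => (cond p.2.2 0 1 : ℚ))).comp
    (b.repr : D.carrier →ₗ[ℚ] (ℕ × ℕ × Bool →₀ ℚ))

theorem phi_basis (p : ℕ × ℕ × Bool) : phi b (b p) = (cond p.2.2 0 1 : ℚ) := by
  rw [phi, LinearMap.comp_apply]
  simp only [LinearEquiv.coe_coe, Module.Basis.repr_self]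
  rw [Finsupp.linearCombination_single, smul_eq_mul, one_mul]

include hγ hγ' hy hdγ hdγ' hdy hb

theorem mem_dg (p : ℕ × ℕ × Bool) : b p ∈ D.grading (dg p) := by
  obtain ⟨a, c, ε⟩ := p
  cases ε
  · rw [hb]
    simp only [cond, dg, mul_one]
    exact mem_of_eq D (mono_mem γ γ' hγ hγ' a c) (by push_cast; ring)
  · rw [hb]
    simp only [cond, dg]
    exact mem_of_eq D (D.mul_mem (mono_mem γ γ' hγ hγ' a c) hy) (by push_cast; ring)

theorem d_basis_false (a c : ℕ) : D.d (b (a, c, false)) = 0 := by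
  rw [hb]
  simp only [cond, mul_one]
  exact d_mono γ γ' hγ hγ' hdγ hdγ' a c

theorem d_basis_true (a c : ℕ) :
    D.d (b (a, c, true)) = b (a, c, false) - b (a + 1, c + 1, false) := by
  rw [hb (a, c, true), hb (a, c, false), hb (a + 1, c + 1, false)]
  simp only [cond, mul_one]
  rw [D.leibniz (mono_mem γ γ' hγ hγ' a c), d_mono γ γ' hγ hγ' hdγ hdγ' a c, hdy,
    zero_mul, zero_add, Even.neg_one_zpow ⟨(a : ℤ) - c, by ring⟩, one_smul,
    mul_sub, mul_one, mono_shuffle γ γ' hγ hγ' a c]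

theorem repr_dg_ne {i : ℤ} {x : D.carrier} (hx : x ∈ D.grading i) :
    ∀ p : ℕ × ℕ × Bool, dg p ≠ i → b.repr x p = 0 := by
  intro p0 hp0
  classical
  by_cases hps : p0 ∈ (b.repr x).support
  swap
  · exact Finsupp.notMem_support_iff.mp hps
  set c := b.repr x with hc
  set s := c.support with hs
  set T : Finset ℤ := s.image dg with hT
  set g : ℤ → D.carrier := fun j => ∑ p ∈ s.filter (fun p => dg p = j), c p • b p with hg
  have hmemg : ∀ j, g j ∈ D.grading j := by
    intro j
    apply Submodule.sum_mem
    intro p hp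
    obtain ⟨-, hpd⟩ := Finset.mem_filter.mp hp
    exact Submodule.smul_mem _ _ (mem_of_eq D (mem_dg b hγ hγ' hy hdγ hdγ' hdy hb p) hpd)
  have hsum : ∑ j ∈ T, g j = x := by
    rw [hg, hT, Finset.sum_fiberwise_of_maps_to (fun p hp => Finset.mem_image_of_mem dg hp)]
    have := b.linearCombination_repr x
    rw [Finsupp.linearCombination_apply, Finsupp.sum] at this
    exact this
  -- build two elements of the direct sum with the same image
  set u : DirectSum ℤ (fun j => D.grading j) :=
    ∑ j ∈ T, DirectSum.of (fun j => D.grading j) j ⟨g j, hmemg j⟩ with hu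
  set v : DirectSum ℤ (fun j => D.grading j) :=
    DirectSum.of (fun j => D.grading j) i ⟨x, hx⟩ with hv
  have huv : u = v := by
    apply D.isInternal.injective
    rw [hu, hv, map_sum, DirectSum.coeAddMonoidHom_of]
    simp only [DirectSum.coeAddMonoidHom_of]
    exact hsum
  set j0 : ℤ := dg p0 with hj0
  have hj0T : j0 ∈ T := Finset.mem_image_of_mem dg hps
  have hgj0 : g j0 = 0 := by
    have h1 : u j0 = ⟨g j0, hmemg j0⟩ := by
      rw [hu, DFinsupp.finset_sum_apply]
      rw [Finset.sum_eq_single_of_mem j0 hj0T]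
      · exact DirectSum.of_eq_same _ _
      · intro j _ hj
        exact DirectSum.of_eq_of_ne _ _ _ (Ne.symm hj)
    have h2 : v j0 = 0 := DirectSum.of_eq_of_ne _ _ _ (fun h => hp0 (h ▸ rfl))
    have h3 : (⟨g j0, hmemg j0⟩ : D.grading j0) = 0 := by rw [← h1, huv, h2]
    exact congrArg Subtype.val h3
  have hthis := congrArg (b.coord p0) hgj0
  rw [map_zero, hg, map_sum] at hthis
  have hsum2 : ∑ p ∈ s.filter (fun p => dg p = j0), (b.coord p0) (c p • b p) = c p0 := by
    rw [Finset.sum_eq_single_of_mem p0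
        (show p0 ∈ s.filter (fun p => dg p = j0) from Finset.mem_filter.mpr ⟨hps, rfl⟩)]
    · rw [map_smul, Module.Basis.coord_apply, Module.Basis.repr_self, Finsupp.single_apply, if_pos rfl,
        smul_eq_mul, mul_one]
    · intro p hp hpne
      rw [map_smul, Module.Basis.coord_apply, Module.Basis.repr_self, Finsupp.single_apply, if_neg hpne,
        smul_eq_mul, mul_zero]
  rw [hsum2] at hthis
  exact hthis

theorem coord_d_succ (a c : ℕ) :
    (b.coord (a + 1, c + 1, false)).comp D.d
      = b.coord (a + 1, c + 1, true) - b.coord (a, c, true) := by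
  apply b.ext
  rintro ⟨a', c', ε⟩
  cases ε <;>
    simp only [LinearMap.comp_apply, LinearMap.sub_apply,
      d_basis_false b hγ hγ' hy hdγ hdγ' hdy hb, d_basis_true b hγ hγ' hy hdγ hdγ' hdy hb,
      map_sub, map_zero, Module.Basis.coord_apply, Module.Basis.repr_self, Finsupp.single_apply,
      Prod.mk.injEq, Bool.false_eq_true, Bool.true_eq_false, and_true, and_false, false_and, true_and,
      if_false, sub_zero, zero_sub] <;>
    split_ifs
  all_goals (try norm_num)
  all_goals omega

theorem coord_d_zero_left (c : ℕ) :
    (b.coord (0, c, false)).comp D.d = b.coord (0, c, true) := by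
  apply b.ext
  rintro ⟨a', c', ε⟩
  cases ε <;>
    simp only [LinearMap.comp_apply,
      d_basis_false b hγ hγ' hy hdγ hdγ' hdy hb, d_basis_true b hγ hγ' hy hdγ hdγ' hdy hb,
      map_sub, map_zero, Module.Basis.coord_apply, Module.Basis.repr_self, Finsupp.single_apply,
      Prod.mk.injEq, Bool.false_eq_true, Bool.true_eq_false, and_true, and_false, false_and, true_and,
      if_false, sub_zero, zero_sub] <;>
    split_ifs
  all_goals (try norm_num)
  all_goals (try (exfalso; simp_all only [false_and, and_false, and_self, not_true]))
  all_goals omega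

theorem coord_d_zero_right (a : ℕ) :
    (b.coord (a, 0, false)).comp D.d = b.coord (a, 0, true) := by
  apply b.ext
  rintro ⟨a', c', ε⟩
  cases ε <;>
    simp only [LinearMap.comp_apply,
      d_basis_false b hγ hγ' hy hdγ hdγ' hdy hb, d_basis_true b hγ hγ' hy hdγ hdγ' hdy hb,
      map_sub, map_zero, Module.Basis.coord_apply, Module.Basis.repr_self, Finsupp.single_apply,
      Prod.mk.injEq, Bool.false_eq_true, Bool.true_eq_false, and_true, and_false, false_and, true_and,
      if_false, sub_zero, zero_sub] <;>
    split_ifs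
  all_goals (try norm_num)
  all_goals (try (exfalso; simp_all only [false_and, and_false, and_self, not_true]))
  all_goals omega

theorem cycle_true_zero {x : D.carrier} (hx : D.d x = 0) :
    ∀ a c : ℕ, b.repr x (a, c, true) = 0 := by
  intro a
  induction a with
  | zero =>
    intro c
    have h := LinearMap.congr_fun (coord_d_zero_left b hγ hγ' hy hdγ hdγ' hdy hb c) x
    rw [LinearMap.comp_apply, hx, map_zero, Module.Basis.coord_apply] at h
    exact h.symm
  | succ a ih =>
    intro c
    cases c with
    | zero =>
      have h := LinearMap.congr_fun (coord_d_zero_right b hγ hγ' hy hdγ hdγ' hdy hb (a + 1)) x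
      rw [LinearMap.comp_apply, hx, map_zero, Module.Basis.coord_apply] at h
      exact h.symm
    | succ c =>
      have h := LinearMap.congr_fun (coord_d_succ b hγ hγ' hy hdγ hdγ' hdy hb a c) x
      rw [LinearMap.comp_apply, hx, map_zero, LinearMap.sub_apply, Module.Basis.coord_apply,
        Module.Basis.coord_apply] at h
      have h2 := ih c
      have : b.repr x (a + 1, c + 1, true) - b.repr x (a, c, true) = 0 := h.symm
      rw [h2, sub_zero] at this
      exact this


theorem basis_eq_mono (a c : ℕ) : b (a, c, false) = γ ^ a * γ' ^ c := by
  rw [hb]; simp only [cond]; rw [mul_one]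

theorem basis_sub_ipow : ∀ (c a : ℕ),
    D.IsBoundary (2 * ((a : ℤ) - c)) (b (a, c, false) - ipow γ γ' ((a : ℤ) - c)) := by
  intro c
  induction c with
  | zero =>
    intro a
    have he : b (a, 0, false) - ipow γ γ' ((a : ℤ) - (0 : ℕ)) = 0 := by
      rw [basis_eq_mono b hγ hγ' hy hdγ hdγ' hdy hb, Nat.cast_zero, sub_zero,
        ipow_natCast γ γ' a, pow_zero, mul_one, sub_self]
    rw [he]
    exact isBoundary_zero D _
  | succ c ih =>
    intro a
    cases a with
    | zero =>
      have he : b (0, c + 1, false) - ipow γ γ' ((0 : ℕ) - ((c : ℕ) + 1 : ℕ)) = 0 := by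
        rw [basis_eq_mono b hγ hγ' hy hdγ hdγ' hdy hb, pow_zero, one_mul]
        rw [show ((0 : ℕ) : ℤ) - ((c + 1 : ℕ) : ℤ) = -((c + 1 : ℕ) : ℤ) by push_cast; ring]
        rw [ipow_neg_natCast γ γ' (c + 1) (by omega), sub_self]
      rw [he]
      exact isBoundary_zero D _
    | succ a =>
      have hk : ((a + 1 : ℕ) : ℤ) - ((c + 1 : ℕ) : ℤ) = (a : ℤ) - c := by push_cast; ring
      rw [hk]
      have h1 : D.IsBoundary (2 * ((a : ℤ) - c)) (b (a + 1, c + 1, false) - b (a, c, false)) := by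
        refine ⟨-b (a, c, true), ?_, ?_⟩
        · exact Submodule.neg_mem _ (mem_of_eq D (mem_dg b hγ hγ' hy hdγ hdγ' hdy hb (a, c, true))
            (by simp only [dg, cond]; push_cast; ring))
        · rw [map_neg, d_basis_true b hγ hγ' hy hdγ hdγ' hdy hb, neg_sub]
      have h2 := ih a
      exact isBoundary_of_eq D (isBoundary_add D h1 h2) (by abel)

theorem phi_d : (phi b).comp D.d = 0 := by
  apply b.ext
  rintro ⟨a, c, ε⟩
  cases ε
  · rw [LinearMap.comp_apply, d_basis_false b hγ hγ' hy hdγ hdγ' hdy hb, map_zero,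
      LinearMap.zero_apply]
  · rw [LinearMap.comp_apply, d_basis_true b hγ hγ' hy hdγ hdγ' hdy hb, map_sub,
      phi_basis b, phi_basis b, LinearMap.zero_apply]
    norm_num

theorem phi_ipow (k : ℤ) : phi b (ipow γ γ' k) = 1 := by
  by_cases hk : 0 ≤ k
  · have : ipow γ γ' k = b (k.toNat, 0, false) := by
      rw [ipow, if_pos hk, basis_eq_mono b hγ hγ' hy hdγ hdγ' hdy hb, pow_zero, mul_one]
    rw [this, phi_basis b]
    rfl
  · have : ipow γ γ' k = b (0, (-k).toNat, false) := by
      rw [ipow, if_neg hk, basis_eq_mono b hγ hγ' hy hdγ hdγ' hdy hb, pow_zero, one_mul]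
    rw [this, phi_basis b]
    rfl

theorem not_boundary_ipow (k : ℤ) : ¬ D.IsBoundary (2 * k) (ipow γ γ' k) := by
  rintro ⟨z, hz, hdz⟩
  have h := LinearMap.congr_fun (phi_d b hγ hγ' hy hdγ hdγ' hdy hb) z
  rw [LinearMap.comp_apply, hdz, LinearMap.zero_apply,
    phi_ipow b hγ hγ' hy hdγ hdγ' hdy hb k] at h
  exact one_ne_zero h

theorem odd_main (k : ℤ) {x : D.carrier} (hx : x ∈ D.grading (2 * k + 1))
    (hdx : D.d x = 0) : D.IsBoundary (2 * k + 1) x := by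
  have hx0 : x = 0 := by
    have hr : b.repr x = 0 := by
      ext p
      obtain ⟨a, c, ε⟩ := p
      rw [Finsupp.coe_zero, Pi.zero_apply]
      cases ε
      · refine repr_dg_ne b hγ hγ' hy hdγ hdγ' hdy hb hx _ ?_
        simp only [dg, cond]
        omega
      · exact cycle_true_zero b hγ hγ' hy hdγ hdγ' hdy hb hdx a c
    have := congrArg b.repr.symm hr
    rwa [LinearEquiv.symm_apply_apply, map_zero] at this
  rw [hx0]
  exact isBoundary_zero D _

theorem even_main (k : ℤ) {x : D.carrier} (hx : x ∈ D.grading (2 * k))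
    (hdx : D.d x = 0) : ∃ c : ℚ, D.IsBoundary (2 * k) (x - c • ipow γ γ' k) := by
  classical
  refine ⟨∑ p ∈ (b.repr x).support, b.repr x p, ?_⟩
  have hxe : ∑ p ∈ (b.repr x).support, b.repr x p • b p = x := by
    have := b.linearCombination_repr x
    rw [Finsupp.linearCombination_apply, Finsupp.sum] at this
    exact this
  have hsplit : ∑ p ∈ (b.repr x).support, b.repr x p • (b p - ipow γ γ' k)
      = x - (∑ p ∈ (b.repr x).support, b.repr x p) • ipow γ γ' k := by
    rw [Finset.sum_congr rfl (fun p _ => smul_sub (b.repr x p) (b p) (ipow γ γ' k)),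
      Finset.sum_sub_distrib, hxe, Finset.sum_smul]
  rw [← hsplit]
  apply isBoundary_sum D
  intro p hp
  have hne : b.repr x p ≠ 0 := Finsupp.mem_support_iff.mp hp
  have hdg : dg p = 2 * k := by
    by_contra hcon
    exact hne (repr_dg_ne b hγ hγ' hy hdγ hdγ' hdy hb hx p hcon)
  obtain ⟨a, c, ε⟩ := p
  cases ε
  · simp only [dg, cond] at hdg
    have hk : (a : ℤ) - c = k := by omega
    have hbd := basis_sub_ipow b hγ hγ' hy hdγ hdγ' hdy hb c a
    rw [hk] at hbd
    exact isBoundary_smul D _ hbd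
  · exfalso
    simp only [dg, cond] at hdg
    omega

end BasisLemmas


end KoszulAux


/-- the CDGA `D = ℚ[γ,γ̄] ⊗ E(y)` with `|γ| = 2`, `|γ̄| = -2`, `|y| = 1`,
`d γ = d γ̄ = 0` and `d y = 1 - γγ̄` (encoded as a CDGA with elements `γ, γ̄, y` of
the given degrees and differentials, such that the monomials `γ^a γ̄^b y^ε` form a
`ℚ`-basis) has homology isomorphic as a graded `ℚ`-algebra to the Laurent
polynomial ring `ℚ[β^{±1}]` with `|β| = 2`, the isomorphism sending the class of
`γ` to `β`. -/
theorem koszul_laurent_homology (D : CDGA) (γ γ' y : D.carrier)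
    (hγ : γ ∈ D.grading 2) (hγ' : γ' ∈ D.grading (-2)) (hy : y ∈ D.grading 1)
    (hdγ : D.d γ = 0) (hdγ' : D.d γ' = 0) (hdy : D.d y = 1 - γ * γ')
    (b : Module.Basis (ℕ × ℕ × Bool) ℚ D.carrier)
    (hb : ∀ p : ℕ × ℕ × Bool, b p = γ ^ p.1 * γ' ^ p.2.1 * (cond p.2.2 y 1)) :
    HomologyIsLaurentOn D γ γ' := by
  refine ⟨hγ, hγ', hdγ, hdγ', ?_, ?_, ?_, ?_⟩
  · refine ⟨-y, Submodule.neg_mem _ (KoszulAux.mem_of_eq D hy (by norm_num)), ?_⟩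
    rw [map_neg, hdy, neg_sub]
  · intro k x hx hdx
    exact KoszulAux.odd_main b hγ hγ' hy hdγ hdγ' hdy hb k hx hdx
  · intro k x hx hdx
    exact KoszulAux.even_main b hγ hγ' hy hdγ hdγ' hdy hb k hx hdx
  · intro k
    exact KoszulAux.not_boundary_ipow b hγ hγ' hy hdγ hdγ' hdy hb k
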